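/- Let k and α be real numbers with 0 < k ≤ 1 and α ≥ 1, let N ≥ 1 be a natural number, and let a_0, a_1, …, a_{N−1} be nonnegative real numbers satisfying a_{j+1} ≤ k·a_j for every j = 0, 1, …, N−2. Setting w = ((1+k)^α − 1)/k^α, one has (∑_{j=0}^{N−1} a_j)^α ≥ ∑_{j=0}^{N−1} w^{ω_H(j)} · a_j^α. -/

import Mathlib

/-- The Hamming weight of a natural number: the number of 1's in its binary expansion. -/
def hammingWeight (j : ℕ) : ℕ := (Nat.digits 2 j).sum

lemma hw_rec (j : ℕ) : hammingWeight j = j % 2 + hammingWeight (j / 2) := by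
  rcases Nat.eq_zero_or_pos j with h | h
  · simp [h, hammingWeight]
  · unfold hammingWeight
    rw [Nat.digits_def' (by norm_num : 1 < 2) h]
    simp

lemma hw_pow_add : ∀ m j : ℕ, j < 2 ^ m →
    hammingWeight (2 ^ m + j) = hammingWeight j + 1 := by
  intro m
  induction m with
  | zero =>
    intro j hj
    interval_cases j
    norm_num [hammingWeight]
  | succ m ih =>
    intro j hj
    have hp : 0 < 2 ^ m := Nat.pow_pos (by norm_num)
    have hsplit : 2 ^ (m + 1) = 2 * 2 ^ m := by ring
    rw [hsplit] at hj ⊢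
    rw [hw_rec (2 * 2 ^ m + j), hw_rec j]
    have h1 : (2 * 2 ^ m + j) % 2 = j % 2 := by omega
    have h2 : (2 * 2 ^ m + j) / 2 = 2 ^ m + j / 2 := by omega
    have h3 : j / 2 < 2 ^ m := by omega
    rw [h1, h2, ih (j / 2) h3]
    omega

lemma key_ineq (k α : ℝ) (hk0 : 0 < k) (hα : 1 ≤ α)
    (x y : ℝ) (hy : 0 ≤ y) (hxy : y ≤ k * x) :
    x ^ α + ((1 + k) ^ α - 1) / k ^ α * y ^ α ≤ (x + y) ^ α := by
  have hα0 : (0:ℝ) < α := lt_of_lt_of_le one_pos hα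
  have hx : 0 ≤ x := by nlinarith
  rcases eq_or_lt_of_le hy with h0 | h0
  · rw [← h0]
    simp [Real.zero_rpow hα0.ne']
  · have hderiv : ∀ z : ℝ, HasDerivAt (fun t => (t + y) ^ α - t ^ α)
        (α * (z + y) ^ (α - 1) * 1 - α * z ^ (α - 1)) z := by
      intro z
      exact ((Real.hasDerivAt_rpow_const (p := α) (x := z + y) (Or.inr hα)).comp z
        ((hasDerivAt_id z).add_const y)).sub (Real.hasDerivAt_rpow_const (Or.inr hα))
    have hdiff : Differentiable ℝ (fun t : ℝ => (t + y) ^ α - t ^ α) :=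
      fun z => (hderiv z).differentiableAt
    have hmono : MonotoneOn (fun t : ℝ => (t + y) ^ α - t ^ α) (Set.Ici (0:ℝ)) := by
      apply monotoneOn_of_deriv_nonneg (convex_Ici 0) hdiff.continuous.continuousOn
        hdiff.differentiableOn
      intro z hz
      rw [interior_Ici] at hz
      rw [(hderiv z).deriv]
      have h1 : z ^ (α - 1) ≤ (z + y) ^ (α - 1) :=
        Real.rpow_le_rpow (le_of_lt hz) (by linarith) (by linarith)
      nlinarith
    have hc0 : (0:ℝ) ≤ y / k := div_nonneg hy hk0.le
    have hcx : y / k ≤ x := (div_le_iff₀ hk0).mpr (by linarith)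
    have hm := hmono (Set.mem_Ici.mpr hc0) (Set.mem_Ici.mpr (le_trans hc0 hcx)) hcx
    have e1 : y / k + y = y * ((1 + k) / k) := by field_simp
    have e2 : (y * ((1 + k) / k)) ^ α = y ^ α * ((1 + k) ^ α / k ^ α) := by
      rw [Real.mul_rpow h0.le (by positivity), Real.div_rpow (by positivity) hk0.le]
    have e3 : (y / k) ^ α = y ^ α / k ^ α := Real.div_rpow h0.le hk0.le α
    have hk' : (0:ℝ) < k ^ α := Real.rpow_pos_of_pos hk0 α
    have hval : (y / k + y) ^ α - (y / k) ^ α = ((1 + k) ^ α - 1) / k ^ α * y ^ α := by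
      rw [e1, e2, e3]
      field_simp
    simp only at hm
    linarith [hm, hval]

lemma main_ind (k α : ℝ) (hk0 : 0 < k) (hk1 : k ≤ 1) (hα : 1 ≤ α) :
    ∀ m : ℕ, ∀ a : ℕ → ℝ, (∀ j, 0 ≤ a j) → (∀ j, a (j + 1) ≤ k * a j) →
    ∑ j ∈ Finset.range (2 ^ m), (((1 + k) ^ α - 1) / k ^ α) ^ hammingWeight j * a j ^ α
      ≤ (∑ j ∈ Finset.range (2 ^ m), a j) ^ α := by
  intro m
  induction m with
  | zero =>
    intro a ha _
    simp [hammingWeight]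
  | succ m ih =>
    intro a ha hdec
    have hw0 : 0 ≤ ((1 + k) ^ α - 1) / k ^ α := by
      apply div_nonneg _ (Real.rpow_nonneg hk0.le α)
      have h1 : (1:ℝ) ≤ (1 + k) ^ α := by
        have := Real.one_le_rpow (by linarith : (1:ℝ) ≤ 1 + k) (by linarith : (0:ℝ) ≤ α)
        linarith
      linarith
    have hstep : ∀ n j : ℕ, a (j + (n + 1)) ≤ k * a j := by
      intro n
      induction n with
      | zero => intro j; exact hdec j
      | succ n ihn =>
        intro j
        have h1 : a (j + (n + 1 + 1)) = a ((j + 1) + (n + 1)) := by ring_nf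
        rw [h1]
        calc a ((j + 1) + (n + 1)) ≤ k * a (j + 1) := ihn (j + 1)
          _ ≤ k * (k * a j) := mul_le_mul_of_nonneg_left (hdec j) hk0.le
          _ ≤ k * a j := by nlinarith [ha j, mul_nonneg hk0.le (ha j)]
    have hsplit : 2 ^ (m + 1) = 2 ^ m + 2 ^ m := by ring
    rw [hsplit, Finset.sum_range_add, Finset.sum_range_add]
    set x := ∑ j ∈ Finset.range (2 ^ m), a j with hx
    set y := ∑ j ∈ Finset.range (2 ^ m), a (2 ^ m + j) with hy
    have hb0 : ∀ j, 0 ≤ a (2 ^ m + j) := fun j => ha _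
    have hbdec : ∀ j, a (2 ^ m + (j + 1)) ≤ k * a (2 ^ m + j) := by
      intro j
      rw [← Nat.add_assoc]
      exact hdec _
    have IH1 := ih a ha hdec
    have IH2 := ih (fun j => a (2 ^ m + j)) hb0 hbdec
    have hyx : y ≤ k * x := by
      rw [hy, hx, Finset.mul_sum]
      apply Finset.sum_le_sum
      intro j _
      have := hstep (2 ^ m - 1) j
      have h2 : 2 ^ m - 1 + 1 = 2 ^ m := by
        have : 0 < 2 ^ m := Nat.pow_pos (by norm_num)
        omega
      rw [h2] at this
      rwa [Nat.add_comm]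
    have hx0 : 0 ≤ x := Finset.sum_nonneg fun j _ => ha j
    have hy0 : 0 ≤ y := Finset.sum_nonneg fun j _ => hb0 j
    have hkey := key_ineq k α hk0 hα x y hy0 hyx
    have e : ∑ j ∈ Finset.range (2 ^ m),
        (((1 + k) ^ α - 1) / k ^ α) ^ hammingWeight (2 ^ m + j) * a (2 ^ m + j) ^ α
        = ((1 + k) ^ α - 1) / k ^ α * ∑ j ∈ Finset.range (2 ^ m),
          (((1 + k) ^ α - 1) / k ^ α) ^ hammingWeight j * a (2 ^ m + j) ^ α := by
      rw [Finset.mul_sum]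
      apply Finset.sum_congr rfl
      intro j hj
      rw [hw_pow_add m j (Finset.mem_range.mp hj), pow_succ]
      ring
    rw [e]
    have h2 : ((1 + k) ^ α - 1) / k ^ α * ∑ j ∈ Finset.range (2 ^ m),
        (((1 + k) ^ α - 1) / k ^ α) ^ hammingWeight j * a (2 ^ m + j) ^ α
        ≤ ((1 + k) ^ α - 1) / k ^ α * y ^ α :=
      mul_le_mul_of_nonneg_left IH2 hw0
    linarith

theorem stmt_9 (k α : ℝ) (hk0 : 0 < k) (hk1 : k ≤ 1) (hα : 1 ≤ α)
    (N : ℕ) (hN : 1 ≤ N) (a : ℕ → ℝ)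
    (ha0 : ∀ j, j < N → 0 ≤ a j)
    (hdec : ∀ j, j + 1 < N → a (j + 1) ≤ k * a j) :
    (∑ j ∈ Finset.range N, a j) ^ α ≥
      ∑ j ∈ Finset.range N, (((1 + k) ^ α - 1) / k ^ α) ^ hammingWeight j * a j ^ α := by
  have hα0 : (0:ℝ) < α := lt_of_lt_of_le one_pos hα
  set a' : ℕ → ℝ := fun j => if j < N then a j else 0 with ha'
  have ha'0 : ∀ j, 0 ≤ a' j := by
    intro j
    simp only [ha']
    split_ifs with h
    · exact ha0 j h
    · exact le_refl 0
  have ha'dec : ∀ j, a' (j + 1) ≤ k * a' j := by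
    intro j
    simp only [ha']
    split_ifs with h1 h2
    · exact hdec j h1
    · omega
    · exact mul_nonneg hk0.le (ha0 j ‹_›)
    · simp
  have hNm : N ≤ 2 ^ N := (Nat.lt_two_pow_self (n := N)).le
  have H := main_ind k α hk0 hk1 hα N a' ha'0 ha'dec
  have eL : ∑ j ∈ Finset.range (2 ^ N), a' j = ∑ j ∈ Finset.range N, a j := by
    rw [← Finset.sum_subset (Finset.range_subset_range.mpr hNm)
      (fun x _ hx => by simp only [ha']; rw [if_neg (by simpa using hx)])]
    apply Finset.sum_congr rfl
    intro j hj
    simp only [ha']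
    rw [if_pos (Finset.mem_range.mp hj)]
  have eR : ∑ j ∈ Finset.range (2 ^ N),
      (((1 + k) ^ α - 1) / k ^ α) ^ hammingWeight j * a' j ^ α
      = ∑ j ∈ Finset.range N, (((1 + k) ^ α - 1) / k ^ α) ^ hammingWeight j * a j ^ α := by
    rw [← Finset.sum_subset (Finset.range_subset_range.mpr hNm)
      (fun x _ hx => by
        simp only [ha']
        rw [if_neg (by simpa using hx), Real.zero_rpow hα0.ne', mul_zero])]
    apply Finset.sum_congr rfl
    intro j hj
    simp only [ha']
    rw [if_pos (Finset.mem_range.mp hj)]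
  rw [ge_iff_le, ← eL, ← eR]
  exact H
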